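/- arXiv:2403.05515 — 3 statements merged into one kernel-verified Lean document; each statement's English description precedes it below -/
import Mathlib

section
/- For all integers m with 1 ≤ m ≤ L, the identity F(m)·F(L-m+2) + 2·F(m-1)·F(L-m+1) + F(m-2)·F(L-m) = F(L-1) + F(L+1) holds, where F is the Fibonacci sequence extended to negative indices by F(-n) = (-1)^{n+1} F(n). -/
/-- Fibonacci numbers extended to negative indices via `F(-n) = (-1)^{n+1} F(n)`. -/
def fibZ (n : ℤ) : ℤ :=
  if 0 ≤ n then (Nat.fib n.toNat : ℤ)
  else (-1) ^ ((-n).toNat + 1) * (Nat.fib (-n).toNat : ℤ)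

lemma fibZ_natCast (n : ℕ) : fibZ (n : ℤ) = Nat.fib n := by
  simp [fibZ]

lemma fibZ_neg_one : fibZ (-1) = 1 := by
  norm_num [fibZ]

lemma fib_key (b k : ℕ) :
    (Nat.fib (b+2) : ℤ) * Nat.fib (k+2) + 2 * Nat.fib (b+1) * Nat.fib (k+1)
      + Nat.fib b * Nat.fib k = Nat.fib (b+k+1) + Nat.fib (b+k+3) := by
  have h1 := Nat.fib_add b k
  have h2 := Nat.fib_add (b+1) (k+1)
  have h3 : b + 1 + (k + 1) + 1 = b + k + 3 := by ring
  rw [h3] at h2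
  push_cast [h1, h2]
  ring

/-- For `1 ≤ m ≤ L`:
`F(m)F(L-m+2) + 2F(m-1)F(L-m+1) + F(m-2)F(L-m) = F(L-1) + F(L+1)`. -/
theorem stmt6 (L m : ℤ) (h1 : 1 ≤ m) (h2 : m ≤ L) :
    fibZ m * fibZ (L - m + 2) + 2 * fibZ (m - 1) * fibZ (L - m + 1)
      + fibZ (m - 2) * fibZ (L - m) = fibZ (L - 1) + fibZ (L + 1) := by
  obtain ⟨k, hk⟩ : ∃ k : ℕ, L - m = (k : ℤ) := ⟨(L - m).toNat, (Int.toNat_of_nonneg (by omega)).symm⟩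
  obtain ⟨a, ha⟩ : ∃ a : ℕ, m - 1 = (a : ℤ) := ⟨(m - 1).toNat, (Int.toNat_of_nonneg (by omega)).symm⟩
  cases a with
  | zero =>
      have hm : m = 1 := by omega
      have hL : L - 1 = (k : ℤ) := by omega
      have hL1 : L + 1 = ((k + 2 : ℕ) : ℤ) := by push_cast; omega
      have hLk1 : L - m + 1 = ((k + 1 : ℕ) : ℤ) := by push_cast; omega
      have hLk2 : L - m + 2 = ((k + 2 : ℕ) : ℤ) := by push_cast; omega
      rw [hLk2, hLk1, hk, hL1, hm]
      have : (1 : ℤ) - 1 = ((0 : ℕ) : ℤ) := by norm_num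
      rw [show (1:ℤ) - 2 = -1 by norm_num, this, show L - 1 = (k:ℤ) from hL]
      rw [fibZ_neg_one, show (1:ℤ) = ((1:ℕ):ℤ) by norm_num]
      simp only [fibZ_natCast]
      ring
  | succ b =>
      have e1 : m = ((b + 2 : ℕ) : ℤ) := by push_cast; omega
      have e2 : m - 1 = ((b + 1 : ℕ) : ℤ) := by push_cast; omega
      have e3 : m - 2 = ((b : ℕ) : ℤ) := by push_cast; omega
      have e4 : L - m + 2 = ((k + 2 : ℕ) : ℤ) := by push_cast; omega
      have e5 : L - m + 1 = ((k + 1 : ℕ) : ℤ) := by push_cast; omega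
      have e6 : L - 1 = ((b + k + 1 : ℕ) : ℤ) := by push_cast; omega
      have e7 : L + 1 = ((b + k + 3 : ℕ) : ℤ) := by push_cast; omega
      rw [e4, e5, hk, e6, e7, e2, e3, e1]
      simp only [fibZ_natCast]
      exact fib_key b k
end

section
/- Let P be an orthogonal projection and U a unitary on a finite-dimensional complex Hilbert space, and suppose P and U have no common eigenvector. Then every eigenvalue μ of M = P∘U satisfies |μ| < 1, and consequently M^k → 0 as k → ∞. -/
open scoped NNReal ENNReal

/-- If the orthogonal projection `P` and the unitary `U` have no common eigenvector, then
every eigenvalue `μ` of `M = P ∘ U` satisfies `|μ| < 1`, and `M^k → 0` in operator norm. -/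
theorem stmt9 {V : Type*} [NormedAddCommGroup V] [InnerProductSpace ℂ V]
    [FiniteDimensional ℂ V]
    (P U : V →L[ℂ] V)
    (hPproj : P ∘L P = P) (hPsa : IsSelfAdjoint P)
    (hUiso : ∀ x y : V, (inner ℂ (U x) (U y) : ℂ) = inner ℂ x y)
    (hUsurj : Function.Surjective U)
    (hno : ¬ ∃ v : V, v ≠ 0 ∧ ∃ lam kap : ℂ, P v = lam • v ∧ U v = kap • v) :
    (∀ (μ : ℂ) (Φ : V), Φ ≠ 0 → (P ∘L U) Φ = μ • Φ → ‖μ‖ < 1) ∧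
      Filter.Tendsto (fun k : ℕ => ‖(P ∘L U) ^ k‖) Filter.atTop (nhds 0) := by
  have hsym : ∀ x y : V, (inner ℂ (P x) y : ℂ) = inner ℂ x (P y) :=
    ContinuousLinearMap.isSelfAdjoint_iff_isSymmetric.mp hPsa
  -- norm preservation of U
  have hUnorm : ∀ x : V, ‖U x‖ = ‖x‖ := by
    intro x
    have h1 : (‖U x‖ : ℝ) ^ 2 = ‖x‖ ^ 2 := by
      have := congrArg (RCLike.re (K := ℂ)) (hUiso x x)
      rwa [inner_self_eq_norm_sq, inner_self_eq_norm_sq] at this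
    nlinarith [norm_nonneg (U x), norm_nonneg x]
  -- orthogonality: ⟪P x, x - P x⟫ = 0
  have horth : ∀ x : V, (inner ℂ (P x) (x - P x) : ℂ) = 0 := by
    intro x
    have hPP : P (P x) = P x := by
      have := congrFun (congrArg DFunLike.coe hPproj) x
      simpa using this
    rw [inner_sub_right]
    have h1 : (inner ℂ (P x) x : ℂ) = inner ℂ x (P x) := hsym x x
    have h2 : (inner ℂ (P x) (P x) : ℂ) = inner ℂ x (P (P x)) := hsym x (P x)
    rw [h1, h2, hPP]
    ring
  -- Pythagoras: ‖x‖^2 = ‖P x‖^2 + ‖x - P x‖^2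
  have hpyth : ∀ x : V, ‖x‖ ^ 2 = ‖P x‖ ^ 2 + ‖x - P x‖ ^ 2 := by
    intro x
    have h := norm_add_sq_eq_norm_sq_add_norm_sq_of_inner_eq_zero (P x) (x - P x) (horth x)
    rw [show P x + (x - P x) = x by abel] at h
    rw [pow_two, pow_two, pow_two]
    exact h
  have hPle : ∀ x : V, ‖P x‖ ≤ ‖x‖ := by
    intro x
    nlinarith [hpyth x, norm_nonneg (P x), norm_nonneg x, sq_nonneg ‖x - P x‖]
  have hPeq : ∀ x : V, ‖P x‖ = ‖x‖ → P x = x := by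
    intro x hx
    have hx2 : ‖P x‖ ^ 2 = ‖x‖ ^ 2 := by rw [hx]
    have h : ‖x - P x‖ ^ 2 = 0 := by linarith [hpyth x]
    have h0 : x - P x = 0 := norm_eq_zero.mp ((pow_eq_zero_iff (two_ne_zero (α := ℕ))).mp h)
    have := sub_eq_zero.mp h0
    exact this.symm
  -- Part 1
  have key : ∀ (μ : ℂ) (Φ : V), Φ ≠ 0 → (P ∘L U) Φ = μ • Φ → ‖μ‖ < 1 := by
    intro μ Φ hΦ hM
    have hMΦ : P (U Φ) = μ • Φ := hM
    have hle : ‖μ‖ * ‖Φ‖ ≤ ‖Φ‖ := by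
      calc ‖μ‖ * ‖Φ‖ = ‖μ • Φ‖ := (norm_smul μ Φ).symm
        _ = ‖P (U Φ)‖ := by rw [hMΦ]
        _ ≤ ‖U Φ‖ := hPle _
        _ = ‖Φ‖ := hUnorm Φ
    have hΦpos : 0 < ‖Φ‖ := norm_pos_iff.mpr hΦ
    have hμle : ‖μ‖ ≤ 1 := by
      by_contra h
      push_neg at h
      nlinarith
    rcases lt_or_eq_of_le hμle with h | h
    · exact h
    -- ‖μ‖ = 1; derive contradiction
    exfalso
    have hnormeq : ‖P (U Φ)‖ = ‖U Φ‖ := by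
      rw [hMΦ, norm_smul, h, one_mul, hUnorm]
    have hUeig : U Φ = μ • Φ := by
      rw [← hPeq _ hnormeq, hMΦ]
    have hμne : μ ≠ 0 := by
      intro h0; rw [h0] at h; simp at h
    have hPeig : P Φ = Φ := by
      have : P (μ • Φ) = μ • Φ := by rw [← hUeig, hMΦ, hUeig]
      rw [map_smul] at this
      exact smul_right_injective V hμne this
    exact hno ⟨Φ, hΦ, 1, μ, by rw [hPeig, one_smul], hUeig⟩
  refine ⟨key, ?_⟩
  -- Part 2
  by_cases hV : Subsingleton V
  · have : ∀ k : ℕ, ‖(P ∘L U) ^ k‖ = 0 := by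
      intro k
      have : (P ∘L U) ^ k = 0 := Subsingleton.elim _ _
      rw [this, norm_zero]
    have h0 : (fun k : ℕ => ‖(P ∘L U) ^ k‖) = fun _ => (0 : ℝ) := funext this
    rw [h0]
    exact tendsto_const_nhds
  · have : Nontrivial V := not_subsingleton_iff_nontrivial.mp hV
    set M : V →L[ℂ] V := P ∘L U with hMdef
    have hspec : ∀ z ∈ spectrum ℂ M, ‖z‖₊ < 1 := by
      intro z hz
      -- z is an eigenvalue
      have hnotunit : ¬ IsUnit (algebraMap ℂ (V →L[ℂ] V) z - M) := hz
      have hnotinj : ¬ Function.Injective (algebraMap ℂ (V →L[ℂ] V) z - M) := by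
        intro hinj
        apply hnotunit
        rw [ContinuousLinearMap.isUnit_iff_bijective]
        refine ⟨hinj, ?_⟩
        have := LinearMap.injective_iff_surjective
          (f := ((algebraMap ℂ (V →L[ℂ] V) z - M) : V →L[ℂ] V).toLinearMap)
        exact this.mp hinj
      rw [Function.not_injective_iff] at hnotinj
      obtain ⟨a, b, hab, hne⟩ := hnotinj
      have hv : M (a - b) = z • (a - b) := by
        have := sub_eq_zero.mpr hab
        simp only [ContinuousLinearMap.sub_apply, ContinuousLinearMap.algebraMap_apply,
          ContinuousLinearMap.smul_apply, ContinuousLinearMap.one_apply] at this ⊢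
        have h2 : z • a - M a - (z • b - M b) = 0 := by
          simpa [Algebra.algebraMap_eq_smul_one] using this
        rw [map_sub, smul_sub]
        abel_nf
        abel_nf at h2
        linear_combination (norm := module) -h2
      have hvne : a - b ≠ 0 := sub_ne_zero.mpr hne
      have := key z (a - b) hvne hv
      simpa [← NNReal.coe_lt_coe, coe_nnnorm] using this
    -- spectral radius < 1
    have hnt : Nontrivial (V →L[ℂ] V) := by
      obtain ⟨x, hx⟩ := exists_ne (0 : V)
      exact nontrivial_of_ne 1 0 (by intro h; exact hx (by simpa using congrFun (congrArg DFunLike.coe h) x))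
    have hρ : spectralRadius ℂ M < 1 := by
      obtain ⟨z, hz, hzρ⟩ := spectrum.exists_nnnorm_eq_spectralRadius M
      rw [← hzρ]
      exact_mod_cast hspec z hz
    -- Gelfand formula
    obtain ⟨r, hrρ, hr1⟩ := exists_between hρ
    have hrtop : r ≠ ⊤ := ne_top_of_lt hr1
    set r' : ℝ≥0 := r.toNNReal with hr'
    have hrr' : (r' : ℝ≥0∞) = r := ENNReal.coe_toNNReal hrtop
    have hr'1 : (r' : ℝ) < 1 := by
      have := hr1
      rw [← hrr'] at this
      exact_mod_cast this
    have hgel := spectrum.pow_nnnorm_pow_one_div_tendsto_nhds_spectralRadius M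
    have hev : ∀ᶠ n : ℕ in Filter.atTop,
        (‖M ^ n‖₊ : ℝ≥0∞) ^ (1 / (n : ℝ)) < r :=
      hgel.eventually_lt_const hrρ
    rw [Filter.eventually_atTop] at hev
    obtain ⟨N, hN⟩ := hev
    have hbound : ∀ n ≥ max N 1, ‖M ^ n‖ ≤ (r' : ℝ) ^ n := by
      intro n hn
      have hnN : n ≥ N := le_trans (le_max_left _ _) hn
      have hn1 : 1 ≤ n := le_trans (le_max_right _ _) hn
      have h := (hN n hnN).le
      have hnne : (n : ℝ) ≠ 0 := by positivity
      have h2 : ((‖M ^ n‖₊ : ℝ≥0∞) ^ (1 / (n : ℝ))) ^ (n : ℝ) ≤ r ^ (n : ℝ) :=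
        ENNReal.rpow_le_rpow h (by positivity)
      rw [← ENNReal.rpow_mul, one_div, inv_mul_cancel₀ hnne, ENNReal.rpow_one] at h2
      rw [← hrr', ← ENNReal.coe_rpow_of_nonneg _ (by positivity)] at h2
      have h3 : ‖M ^ n‖₊ ≤ r' ^ (n : ℝ) := by exact_mod_cast h2
      have h4 : (‖M ^ n‖₊ : ℝ) ≤ ((r' ^ (n : ℝ) : ℝ≥0) : ℝ) := h3
      rw [NNReal.coe_rpow, Real.rpow_natCast] at h4
      simpa [coe_nnnorm] using h4
    have htend : Filter.Tendsto (fun n : ℕ => (r' : ℝ) ^ n) Filter.atTop (nhds 0) :=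
      tendsto_pow_atTop_nhds_zero_of_lt_one (r'.coe_nonneg) hr'1
    refine squeeze_zero' ?_ ?_ htend
    · exact Filter.Eventually.of_forall fun n => norm_nonneg _
    · rw [Filter.eventually_atTop]
      exact ⟨max N 1, hbound⟩
end

section
/- Consider the 4×4 positive semidefinite matrix ρ = (1/χ)[ F_{L-1}(|00⟩-|11⟩)(⟨00|-⟨11|) + F_L |00⟩⟨00| ] with χ = F_{L-1}+F_{L+1}, acting on the span of |00⟩ and |11⟩ in ℂ²⊗ℂ². Then ρ has unit trace, and as L → ∞ it converges to (1/(√5·φ))(φ²|00⟩⟨00| + |11⟩⟨11| − |00⟩⟨11| − |11⟩⟨00|), where φ is the golden ratio. -/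
/-- The golden ratio. -/
noncomputable def phi : ℝ := (1 + Real.sqrt 5) / 2

/-- The vector `|00⟩ - |11⟩` (as coefficients on the product basis of `ℂ²⊗ℂ²`). -/
def vMinus : Fin 2 × Fin 2 → ℝ := fun p =>
  if p = (0, 0) then 1 else if p = (1, 1) then -1 else 0

/-- `ρ_L = (1/χ)[F_{L-1}(|00⟩-|11⟩)(⟨00|-⟨11|) + F_L |00⟩⟨00|]` with `χ = F_{L-1}+F_{L+1}`. -/
noncomputable def rhoMat (L : ℕ) : Matrix (Fin 2 × Fin 2) (Fin 2 × Fin 2) ℝ :=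
  fun i j => ((Nat.fib (L - 1) + Nat.fib (L + 1) : ℝ))⁻¹ *
    ((Nat.fib (L - 1) : ℝ) * vMinus i * vMinus j +
      (Nat.fib L : ℝ) * (if i = (0, 0) ∧ j = (0, 0) then 1 else 0))

/-- The limiting matrix `(1/(√5 φ))(φ²|00⟩⟨00| + |11⟩⟨11| − |00⟩⟨11| − |11⟩⟨00|)`. -/
noncomputable def rhoLim : Matrix (Fin 2 × Fin 2) (Fin 2 × Fin 2) ℝ :=
  fun i j => (Real.sqrt 5 * phi)⁻¹ *
    (if i = (0, 0) ∧ j = (0, 0) then phi ^ 2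
     else if i = (1, 1) ∧ j = (1, 1) then 1
     else if (i = (0, 0) ∧ j = (1, 1)) ∨ (i = (1, 1) ∧ j = (0, 0)) then -1 else 0)

open Real Filter

lemma phi_eq : phi = goldenRatio := rfl

lemma sqrt5_pos : (0:ℝ) < Real.sqrt 5 := Real.sqrt_pos.mpr (by norm_num)

lemma one_add_phi_sq : 1 + phi ^ 2 = Real.sqrt 5 * phi := by
  have h5 : Real.sqrt 5 ^ 2 = 5 := Real.sq_sqrt (by norm_num)
  rw [phi]; nlinarith [h5]

lemma one_add_phi_sq_pos : (0:ℝ) < 1 + phi ^ 2 := by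
  rw [one_add_phi_sq]; exact mul_pos sqrt5_pos (phi_eq ▸ goldenRatio_pos)

/-- Key limit: `F_{n+j}/(F_n + F_{n+2}) → φ^j/(1+φ²)`. -/
lemma keyLim (j : ℕ) :
    Tendsto (fun n : ℕ => (Nat.fib (n + j) : ℝ) / ((Nat.fib n : ℝ) + Nat.fib (n + 2)))
      atTop (nhds (phi ^ j / (1 + phi ^ 2))) := by
  have hψφ : |goldenConj / goldenRatio| < 1 := by
    rw [abs_div, abs_of_pos goldenRatio_pos, abs_of_neg goldenConj_neg, div_lt_one goldenRatio_pos]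
    linarith [neg_one_lt_goldenConj, one_lt_goldenRatio]
  set t : ℕ → ℝ := fun n => (goldenConj / goldenRatio) ^ n with ht_def
  have ht : Tendsto t atTop (nhds 0) :=
    tendsto_pow_atTop_nhds_zero_of_abs_lt_one hψφ
  have hnum : Tendsto (fun n => goldenRatio ^ j - t n * goldenConj ^ j) atTop
      (nhds (goldenRatio ^ j)) := by
    have := tendsto_const_nhds (x := goldenRatio ^ j) (f := atTop (α := ℕ)) |>.sub
      (ht.mul_const (goldenConj ^ j))
    simpa using this
  have hden : Tendsto (fun n => (1 + goldenRatio ^ 2) - t n * (1 + goldenConj ^ 2)) atTop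
      (nhds (1 + goldenRatio ^ 2)) := by
    have := tendsto_const_nhds (x := 1 + goldenRatio ^ 2) (f := atTop (α := ℕ)) |>.sub
      (ht.mul_const (1 + goldenConj ^ 2))
    simpa using this
  have hlim := hnum.div hden (phi_eq ▸ ne_of_gt one_add_phi_sq_pos)
  rw [show (nhds (phi ^ j / (1 + phi ^ 2))) = nhds (goldenRatio ^ j / (1 + goldenRatio ^ 2)) by
    rw [phi_eq]]
  refine hlim.congr fun n => ?_
  -- show the algebraic identity
  have hgne : goldenRatio ^ n ≠ 0 := pow_ne_zero _ goldenRatio_ne_zero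
  have hs : Real.sqrt 5 ≠ 0 := ne_of_gt sqrt5_pos
  have hNum : (Nat.fib (n + j) : ℝ) =
      goldenRatio ^ n * (goldenRatio ^ j - t n * goldenConj ^ j) / Real.sqrt 5 := by
    rw [Real.coe_fib_eq, ht_def]
    simp only [div_pow]
    field_simp
    ring
  have hDen : (Nat.fib n : ℝ) + Nat.fib (n + 2) =
      goldenRatio ^ n * ((1 + goldenRatio ^ 2) - t n * (1 + goldenConj ^ 2)) / Real.sqrt 5 := by
    rw [Real.coe_fib_eq, Real.coe_fib_eq, ht_def]
    simp only [div_pow]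
    field_simp
    ring
  have hDpos : (0:ℝ) < (Nat.fib n : ℝ) + Nat.fib (n + 2) := by
    have : 1 ≤ Nat.fib (n + 2) := Nat.fib_pos.mpr (by omega)
    have : (1:ℝ) ≤ Nat.fib (n + 2) := by exact_mod_cast this
    positivity
  have hD2 : (1 + goldenRatio ^ 2) - t n * (1 + goldenConj ^ 2) ≠ 0 := by
    intro h
    rw [hDen, h] at hDpos
    simp at hDpos
  simp only [Pi.div_apply]
  rw [div_eq_div_iff hD2 (ne_of_gt hDpos), hNum, hDen]
  ring

/-- `ρ_L` has unit trace for `L ≥ 1`, and converges entrywise to `rhoLim` as `L → ∞`. -/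
theorem stmt13 :
    (∀ L : ℕ, 1 ≤ L → Matrix.trace (rhoMat L) = 1) ∧
      ∀ i j : Fin 2 × Fin 2,
        Filter.Tendsto (fun L : ℕ => rhoMat L i j) Filter.atTop (nhds (rhoLim i j)) := by
  constructor
  · intro L hL
    obtain ⟨m, rfl⟩ : ∃ m, L = m + 1 := ⟨L - 1, by omega⟩
    have hfib : Nat.fib (m + 2) = Nat.fib m + Nat.fib (m + 1) := Nat.fib_add_two
    have hpos : (0:ℝ) < (Nat.fib m : ℝ) + Nat.fib (m + 2) := by
      have : 1 ≤ Nat.fib (m + 2) := Nat.fib_pos.mpr (by omega)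
      have : (1:ℝ) ≤ Nat.fib (m + 2) := by exact_mod_cast this
      positivity
    simp only [Matrix.trace, Matrix.diag, Fintype.sum_prod_type, Fin.sum_univ_succ,
      Fin.sum_univ_zero, rhoMat, vMinus, Nat.add_sub_cancel]
    norm_num
    rw [hfib]
    push_cast
    have hy : (1:ℝ) ≤ Nat.fib (1 + m) := by
      exact_mod_cast Nat.fib_pos.mpr (by omega)
    have hx : (0:ℝ) ≤ Nat.fib m := Nat.cast_nonneg _
    have hy2 : (1:ℝ) ≤ Nat.fib (m + 1) := by
      exact_mod_cast Nat.fib_pos.mpr (by omega)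
    have hne : (Nat.fib m : ℝ) * 2 + Nat.fib (1 + m) ≠ 0 := by nlinarith
    field_simp [hne]
    ring
  · intro i j
    have hconst : (1 + phi ^ 2) = Real.sqrt 5 * phi := one_add_phi_sq
    have hswap : ∀ (c : ℝ), Tendsto (fun n : ℕ => rhoMat (n + 1) i j) atTop (nhds c) →
        Tendsto (fun L : ℕ => rhoMat L i j) atTop (nhds c) := by
      intro c h
      exact (Filter.tendsto_add_atTop_iff_nat 1).mp h
    fin_cases i <;> fin_cases j <;>
      refine hswap _ ?_ <;>
      simp only [rhoMat, rhoLim, vMinus, Nat.add_sub_cancel] <;>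
      norm_num
    -- the four nontrivial entries
    · -- (0,0),(0,0)
      have h := (keyLim 0).add (keyLim 1)
      have hc : phi⁻¹ * (Real.sqrt 5)⁻¹ * phi ^ 2 =
          phi ^ 0 / (1 + phi ^ 2) + phi ^ 1 / (1 + phi ^ 2) := by
        rw [one_add_phi_sq, phi_eq, goldenRatio_sq]
        have h1 : goldenRatio ≠ 0 := goldenRatio_ne_zero
        have h2 : Real.sqrt 5 ≠ 0 := ne_of_gt sqrt5_pos
        field_simp
        ring
      rw [hc]
      refine h.congr fun n => ?_
      rw [show n + 1 + 1 = n + 2 from rfl, show n + 0 = n from rfl]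
      ring
    · -- (0,0),(1,1)
      have h := keyLim 0
      have hc : phi⁻¹ * (Real.sqrt 5)⁻¹ = phi ^ 0 / (1 + phi ^ 2) := by
        rw [one_add_phi_sq, pow_zero]
        have h1 : phi ≠ 0 := phi_eq ▸ goldenRatio_ne_zero
        have h2 : Real.sqrt 5 ≠ 0 := ne_of_gt sqrt5_pos
        field_simp
      rw [hc]
      refine h.congr fun n => ?_
      rw [show n + 1 + 1 = n + 2 from rfl, show n + 0 = n from rfl]
      ring
    · -- (1,1),(0,0)
      have h := keyLim 0
      have hc : phi⁻¹ * (Real.sqrt 5)⁻¹ = phi ^ 0 / (1 + phi ^ 2) := by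
        rw [one_add_phi_sq, pow_zero]
        have h1 : phi ≠ 0 := phi_eq ▸ goldenRatio_ne_zero
        have h2 : Real.sqrt 5 ≠ 0 := ne_of_gt sqrt5_pos
        field_simp
      rw [hc]
      refine h.congr fun n => ?_
      rw [show n + 1 + 1 = n + 2 from rfl, show n + 0 = n from rfl]
      ring
    · -- (1,1),(1,1)
      have h := keyLim 0
      have hc : phi⁻¹ * (Real.sqrt 5)⁻¹ = phi ^ 0 / (1 + phi ^ 2) := by
        rw [one_add_phi_sq, pow_zero]
        have h1 : phi ≠ 0 := phi_eq ▸ goldenRatio_ne_zero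
        have h2 : Real.sqrt 5 ≠ 0 := ne_of_gt sqrt5_pos
        field_simp
      rw [hc]
      refine h.congr fun n => ?_
      rw [show n + 1 + 1 = n + 2 from rfl, show n + 0 = n from rfl]
      ring
end
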